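/- Let (H, ι, ▷) be a weak post-Hopf algebroid over R and let P(H) = {x ∈ H : Δ(x) = x ⊗_R 1 + 1 ⊗_R x} be the set of primitive elements. Then P(H) is an R-submodule of H closed under the commutator [x,y] = xy − yx and under ▷; for each x ∈ P(H) the map ρ(x) : f ↦ ε(x ▷ ι(f)) is a k-linear derivation of R; ρ is an R-module homomorphism; ρ([x,y] + x ▷ y − y ▷ x) = ρ(x)∘ρ(y) − ρ(y)∘ρ(x) for all x, y ∈ P(H); and (R, P(H), [·,·], ρ, ▷) is a post-Lie-Rinehart algebra. -/

import Mathlib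

/-!
STATEMENT 2: In any weak post-Hopf algebroid `(H, ι, ▷)` over `R`, for all `f ∈ R` and
`x ∈ H` one has `x ▷ ι(f) = ι(ε(x ▷ ι(f)))` and `ι(f) ▷ x = f·x`.

A cocommutative Hopf `R`-algebra is encoded via Mathlib's `HopfAlgebra R H` (so `ι` is
`algebraMap R H`, whose image is central) together with a cocommutativity axiom.  The
comultiplication is handled through a chosen Sweedler representation `comul x = ∑ c1 x i ⊗ c2 x i`.
-/

open scoped TensorProduct

/-- A weak post-Hopf algebroid over `R`: a cocommutative Hopf `R`-algebra `(H, ι)` together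
with a `k`-bilinear map `▷ : H × H → H` satisfying axioms (1)–(7). -/
structure WeakPostHopfAlgebroid (k R H : Type*) [Field k] [CharZero k]
    [CommRing R] [Algebra k R] [Ring H] [HopfAlgebra R H]
    [Algebra k H] [IsScalarTower k R H] where
  /-- the post-Hopf product `▷` -/
  tr : H → H → H
  /-- size of the chosen Sweedler representation of `comul x` -/
  n : H → ℕ
  /-- first Sweedler components -/
  c1 : H → ℕ → H
  /-- second Sweedler components -/
  c2 : H → ℕ → H
  repr : ∀ x : H, Coalgebra.comul (R := R) x
      = ∑ i ∈ Finset.range (n x), c1 x i ⊗ₜ[R] c2 x i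
  cocomm : ∀ x : H, (TensorProduct.comm R H H) (Coalgebra.comul (R := R) x)
      = Coalgebra.comul (R := R) x
  tr_add_left : ∀ x y z : H, tr (x + y) z = tr x z + tr y z
  tr_add_right : ∀ x y z : H, tr x (y + z) = tr x y + tr x z
  tr_smul_right : ∀ (a : k) (x y : H), tr x (a • y) = a • tr x y
  /-- axiom (1): `Δ(x ▷ y) = (x₁ ▷ y₁) ⊗ (x₂ ▷ y₂)` -/
  comul_tr : ∀ x y : H, Coalgebra.comul (R := R) (tr x y)
      = ∑ i ∈ Finset.range (n x), ∑ j ∈ Finset.range (n y),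
          tr (c1 x i) (c1 y j) ⊗ₜ[R] tr (c2 x i) (c2 y j)
  /-- axiom (2): `x ▷ 1 = ι(ε(x))` -/
  tr_one : ∀ x : H, tr x 1 = algebraMap R H (Coalgebra.counit (R := R) x)
  /-- axiom (3): `1 ▷ x = x` -/
  one_tr : ∀ x : H, tr 1 x = x
  /-- axiom (4): `ι(ε(x ▷ y)) = x ▷ ι(ε(y))` -/
  counit_tr : ∀ x y : H, algebraMap R H (Coalgebra.counit (R := R) (tr x y))
      = tr x (algebraMap R H (Coalgebra.counit (R := R) y))
  /-- axiom (5): `(f·x) ▷ y = f·(x ▷ y)` -/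
  tr_smul_left : ∀ (f : R) (x y : H), tr (f • x) y = f • tr x y
  /-- axiom (6): `x ▷ (yz) = (x₁ ▷ y)(x₂ ▷ z)` -/
  tr_mul : ∀ x y z : H, tr x (y * z)
      = ∑ i ∈ Finset.range (n x), tr (c1 x i) y * tr (c2 x i) z
  /-- axiom (7): `x ▷ (y ▷ z) = (x₁(x₂ ▷ y)) ▷ z` -/
  tr_tr : ∀ x y z : H, tr x (tr y z)
      = tr (∑ i ∈ Finset.range (n x), c1 x i * tr (c2 x i) y) z

/-- The Grossman–Larson product `x *_▷ y := x₁(x₂ ▷ y)` (computed with the chosen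
Sweedler representation). -/
def WeakPostHopfAlgebroid.gl {k R H : Type*} [Field k] [CharZero k]
    [CommRing R] [Algebra k R] [Ring H] [HopfAlgebra R H]
    [Algebra k H] [IsScalarTower k R H]
    (W : WeakPostHopfAlgebroid k R H) (x y : H) : H :=
  ∑ i ∈ Finset.range (W.n x), W.c1 x i * W.tr (W.c2 x i) y

/-- `x` is a primitive element: `Δ(x) = x ⊗ 1 + 1 ⊗ x`. -/
def IsPrimitive (R : Type*) {H : Type*} [CommRing R] [Ring H] [HopfAlgebra R H]
    (x : H) : Prop :=
  Coalgebra.comul (R := R) x = x ⊗ₜ[R] (1 : H) + (1 : H) ⊗ₜ[R] x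

namespace WeakPostHopfAlgebroid

variable {k R H : Type*} [Field k] [CharZero k]
    [CommRing R] [Algebra k R] [Ring H] [HopfAlgebra R H]
    [Algebra k H] [IsScalarTower k R H]
    (W : WeakPostHopfAlgebroid k R H)

/-- Evaluation of an `R`-bilinear map on the chosen Sweedler representation of a
primitive element. -/
lemma sweedler_eval {K : Type*} [AddCommGroup K] [Module R K]
    (Φ : H →ₗ[R] H →ₗ[R] K) {x : H} (hx : IsPrimitive R x) :
    ∑ i ∈ Finset.range (W.n x), Φ (W.c1 x i) (W.c2 x i) = Φ x 1 + Φ 1 x := by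
  have h1 : TensorProduct.lift Φ (Coalgebra.comul (R := R) x)
      = ∑ i ∈ Finset.range (W.n x), Φ (W.c1 x i) (W.c2 x i) := by
    rw [W.repr x]; simp
  have h2 : TensorProduct.lift Φ (Coalgebra.comul (R := R) x) = Φ x 1 + Φ 1 x := by
    rw [hx]; simp
  rw [← h1, h2]

lemma tr_sub_left (x y z : H) : W.tr (x - y) z = W.tr x z - W.tr y z := by
  have h := W.tr_add_left (x - y) y z
  rw [sub_add_cancel] at h
  rw [h]; abel

lemma tr_sub_right (x y z : H) : W.tr x (y - z) = W.tr x y - W.tr x z := by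
  have h := W.tr_add_right x (y - z) z
  rw [sub_add_cancel] at h
  rw [h]; abel

lemma prim_counit {x : H} (hx : IsPrimitive R x) :
    algebraMap R H (Coalgebra.counit (R := R) x) = 0 := by
  have h := Coalgebra.rTensor_counit_comul (R := R) x
  rw [hx, map_add] at h
  simp only [LinearMap.rTensor_tmul, Bialgebra.counit_one] at h
  have h2 : (Coalgebra.counit (R := R) x) ⊗ₜ[R] (1 : H) = 0 := by
    exact add_eq_right.mp h
  have h3 := congrArg (TensorProduct.lid R H) h2
  simpa [Algebra.algebraMap_eq_smul_one] using h3

lemma tr_one_prim {x : H} (hx : IsPrimitive R x) : W.tr x 1 = 0 := by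
  rw [W.tr_one, prim_counit hx]

lemma tr_algebraMap (a : H) (f : R) :
    W.tr a (algebraMap R H f)
      = algebraMap R H (Coalgebra.counit (R := R) (W.tr a (algebraMap R H f))) := by
  have h := W.counit_tr a (algebraMap R H f)
  rw [Bialgebra.counit_algebraMap] at h
  exact h.symm

/-- The derivation property: for primitive `x`,
`x ▷ (f•y) = f•(x ▷ y) + ε(x ▷ ι f)•y`. -/
lemma tr_smul (x : H) (hx : IsPrimitive R x) (f : R) (y : H) :
    W.tr x (f • y) = f • W.tr x y
      + Coalgebra.counit (R := R) (W.tr x (algebraMap R H f)) • y := by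
  have key : W.tr x (f • y) = ∑ i ∈ Finset.range (W.n x),
      Coalgebra.counit (R := R) (W.tr (W.c1 x i) (algebraMap R H f)) • W.tr (W.c2 x i) y := by
    rw [Algebra.smul_def, W.tr_mul]
    refine Finset.sum_congr rfl fun i _ => ?_
    conv_lhs => rw [W.tr_algebraMap (W.c1 x i) f]
    rw [← Algebra.smul_def]
  let Φ : H →ₗ[R] H →ₗ[R] H := LinearMap.mk₂ R
    (fun a b => Coalgebra.counit (R := R) (W.tr a (algebraMap R H f)) • W.tr b y)
    (fun a a' b => by rw [W.tr_add_left, map_add, add_smul])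
    (fun r a b => by rw [W.tr_smul_left, map_smul, smul_eq_mul, mul_smul])
    (fun a b b' => by rw [W.tr_add_left, smul_add])
    (fun r a b => by rw [W.tr_smul_left, smul_comm])
  have hs := W.sweedler_eval Φ hx
  simp only [Φ, LinearMap.mk₂_apply] at hs
  rw [key, hs, W.one_tr, W.one_tr, Bialgebra.counit_algebraMap]
  rw [add_comm]

/-- Leibniz property: for primitive `x`, `x ▷ (yz) = (x ▷ y)z + y(x ▷ z)`. -/
lemma tr_mul_prim (x : H) (hx : IsPrimitive R x) (y z : H) :
    W.tr x (y * z) = W.tr x y * z + y * W.tr x z := by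
  let Φ : H →ₗ[R] H →ₗ[R] H := LinearMap.mk₂ R
    (fun a b => W.tr a y * W.tr b z)
    (fun a a' b => by rw [W.tr_add_left, add_mul])
    (fun r a b => by rw [W.tr_smul_left, smul_mul_assoc])
    (fun a b b' => by rw [W.tr_add_left, mul_add])
    (fun r a b => by rw [W.tr_smul_left, mul_smul_comm])
  have hs := W.sweedler_eval Φ hx
  simp only [Φ, LinearMap.mk₂_apply] at hs
  rw [W.tr_mul, hs, W.one_tr, W.one_tr]

/-- For primitive `x`, `x ▷ (y ▷ z) = (xy) ▷ z + (x ▷ y) ▷ z`. -/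
lemma tr_tr_prim (x : H) (hx : IsPrimitive R x) (y z : H) :
    W.tr x (W.tr y z) = W.tr (x * y) z + W.tr (W.tr x y) z := by
  let Φ : H →ₗ[R] H →ₗ[R] H := LinearMap.mk₂ R
    (fun a b => a * W.tr b y)
    (fun a a' b => by rw [add_mul])
    (fun r a b => by rw [smul_mul_assoc])
    (fun a b b' => by rw [W.tr_add_left, mul_add])
    (fun r a b => by rw [W.tr_smul_left, mul_smul_comm])
  have hs := W.sweedler_eval Φ hx
  simp only [Φ, LinearMap.mk₂_apply] at hs
  rw [W.tr_tr, hs, W.one_tr, one_mul, W.tr_add_left]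


/-- For primitive `x`, `y`, the element `x ▷ y` is primitive. -/
lemma prim_tr {x y : H} (hx : IsPrimitive R x) (hy : IsPrimitive R y) :
    IsPrimitive R (W.tr x y) := by
  unfold IsPrimitive
  rw [W.comul_tr, Finset.sum_comm]
  have step1 : ∀ j ∈ Finset.range (W.n y),
      ∑ i ∈ Finset.range (W.n x),
        W.tr (W.c1 x i) (W.c1 y j) ⊗ₜ[R] W.tr (W.c2 x i) (W.c2 y j)
      = W.tr x (W.c1 y j) ⊗ₜ[R] (W.c2 y j) + (W.c1 y j) ⊗ₜ[R] W.tr x (W.c2 y j) := by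
    intro j _
    let Φ : H →ₗ[R] H →ₗ[R] (H ⊗[R] H) := LinearMap.mk₂ R
      (fun a b => W.tr a (W.c1 y j) ⊗ₜ[R] W.tr b (W.c2 y j))
      (fun a a' b => by rw [W.tr_add_left, TensorProduct.add_tmul])
      (fun r a b => by rw [W.tr_smul_left, TensorProduct.smul_tmul'])
      (fun a b b' => by rw [W.tr_add_left, TensorProduct.tmul_add])
      (fun r a b => by rw [W.tr_smul_left, TensorProduct.tmul_smul])
    have hs := W.sweedler_eval Φ hx
    simp only [Φ, LinearMap.mk₂_apply] at hs
    rw [hs, W.one_tr, W.one_tr]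
  rw [Finset.sum_congr rfl step1]
  let Θ0 : H →+ H →+ (H ⊗[R] H) := AddMonoidHom.mk'
    (fun c => AddMonoidHom.mk' (fun d => W.tr x c ⊗ₜ[R] d + c ⊗ₜ[R] W.tr x d)
      (fun d d' => by
        simp only [W.tr_add_right, TensorProduct.tmul_add]
        abel))
    (fun c c' => by
      ext d
      simp only [AddMonoidHom.mk'_apply, AddMonoidHom.add_apply]
      simp only [W.tr_add_right, TensorProduct.add_tmul]
      abel)
  have bal : ∀ (r : R) (c d : H), Θ0 (r • c) d = Θ0 c (r • d) := by
    intro r c d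
    simp only [Θ0, AddMonoidHom.mk'_apply]
    rw [W.tr_smul x hx, W.tr_smul x hx]
    simp only [TensorProduct.add_tmul, TensorProduct.tmul_add, TensorProduct.smul_tmul]
    abel
  let Θ : H ⊗[R] H →+ H ⊗[R] H := TensorProduct.liftAddHom Θ0 bal
  have h1 : ∑ j ∈ Finset.range (W.n y),
      (W.tr x (W.c1 y j) ⊗ₜ[R] (W.c2 y j) + (W.c1 y j) ⊗ₜ[R] W.tr x (W.c2 y j))
      = Θ (Coalgebra.comul (R := R) y) := by
    rw [W.repr y, map_sum]
    refine Finset.sum_congr rfl fun i _ => ?_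
    rw [show Θ (W.c1 y i ⊗ₜ[R] W.c2 y i) = Θ0 (W.c1 y i) (W.c2 y i) from
      TensorProduct.liftAddHom_tmul Θ0 bal _ _]
    simp only [Θ0, AddMonoidHom.mk'_apply]
  rw [h1, hy, map_add,
    show Θ (y ⊗ₜ[R] (1:H)) = Θ0 y 1 from TensorProduct.liftAddHom_tmul Θ0 bal _ _,
    show Θ ((1:H) ⊗ₜ[R] y) = Θ0 1 y from TensorProduct.liftAddHom_tmul Θ0 bal _ _]
  simp only [Θ0, AddMonoidHom.mk'_apply, W.tr_one_prim hx, TensorProduct.zero_tmul,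
    TensorProduct.tmul_zero, add_zero, zero_add]

/-- Primitive elements are closed under the commutator. -/
lemma prim_comm {x y : H} (hx : IsPrimitive R x) (hy : IsPrimitive R y) :
    IsPrimitive R (x * y - y * x) := by
  unfold IsPrimitive at *
  rw [map_sub, Bialgebra.comul_mul, Bialgebra.comul_mul, hx, hy]
  simp only [mul_add, add_mul, Algebra.TensorProduct.tmul_mul_tmul, one_mul, mul_one,
    TensorProduct.sub_tmul, TensorProduct.tmul_sub]
  abel

/-- The sub-adjacent bracket acts by the commutator of the `▷`-actions. -/
lemma sub_adjacent {x y : H} (hx : IsPrimitive R x) (hy : IsPrimitive R y) (z : H) :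
    W.tr ((x * y - y * x) + W.tr x y - W.tr y x) z
      = W.tr x (W.tr y z) - W.tr y (W.tr x z) := by
  have h : (x * y - y * x) + W.tr x y - W.tr y x
      = (x * y + W.tr x y) - (y * x + W.tr y x) := by abel
  rw [h, W.tr_sub_left, W.tr_add_left, W.tr_add_left, W.tr_tr_prim x hx, W.tr_tr_prim y hy]

end WeakPostHopfAlgebroid



/-- the primitive elements `P(H)` of a weak post-Hopf algebroid form an
`R`-submodule closed under the commutator and under `▷`; `ρ(x)(f) = ε(x ▷ ι(f))` is a
`k`-linear derivation of `R` for each primitive `x`; `ρ` is an `R`-module homomorphism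
and a Lie algebra homomorphism from the sub-adjacent bracket; and
`(R, P(H), [·,·], ρ, ▷)` is a post-Lie-Rinehart algebra. -/
theorem stmt13 {k R H : Type*} [Field k] [CharZero k]
    [CommRing R] [Algebra k R] [Ring H] [HopfAlgebra R H]
    [Algebra k H] [IsScalarTower k R H]
    (W : WeakPostHopfAlgebroid k R H) :
    -- `P(H)` is an `R`-submodule closed under the commutator and under `▷`
    (IsPrimitive R (0 : H))
    ∧ (∀ x y : H, IsPrimitive R x → IsPrimitive R y → IsPrimitive R (x + y))
    ∧ (∀ (f : R) (x : H), IsPrimitive R x → IsPrimitive R (f • x))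
    ∧ (∀ x y : H, IsPrimitive R x → IsPrimitive R y → IsPrimitive R (x * y - y * x))
    ∧ (∀ x y : H, IsPrimitive R x → IsPrimitive R y → IsPrimitive R (W.tr x y))
    -- for primitive `x`, `ρ(x) : f ↦ ε(x ▷ ι(f))` is a `k`-linear derivation of `R`
    ∧ (∀ x : H, IsPrimitive R x →
        (∀ f g : R, Coalgebra.counit (R := R) (W.tr x (algebraMap R H (f + g)))
            = Coalgebra.counit (R := R) (W.tr x (algebraMap R H f))
              + Coalgebra.counit (R := R) (W.tr x (algebraMap R H g)))
        ∧ (∀ (a : k) (f : R), Coalgebra.counit (R := R) (W.tr x (algebraMap R H (a • f)))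
            = a • Coalgebra.counit (R := R) (W.tr x (algebraMap R H f)))
        ∧ (∀ f g : R, Coalgebra.counit (R := R) (W.tr x (algebraMap R H (f * g)))
            = f * Coalgebra.counit (R := R) (W.tr x (algebraMap R H g))
              + g * Coalgebra.counit (R := R) (W.tr x (algebraMap R H f))))
    -- `ρ` is an `R`-module homomorphism
    ∧ (∀ (f : R) (x : H), IsPrimitive R x → ∀ g : R,
        Coalgebra.counit (R := R) (W.tr (f • x) (algebraMap R H g))
          = f * Coalgebra.counit (R := R) (W.tr x (algebraMap R H g)))
    ∧ (∀ x y : H, IsPrimitive R x → IsPrimitive R y → ∀ g : R,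
        Coalgebra.counit (R := R) (W.tr (x + y) (algebraMap R H g))
          = Coalgebra.counit (R := R) (W.tr x (algebraMap R H g))
            + Coalgebra.counit (R := R) (W.tr y (algebraMap R H g)))
    -- `ρ` is a Lie algebra homomorphism from the sub-adjacent Lie algebra
    ∧ (∀ x y : H, IsPrimitive R x → IsPrimitive R y → ∀ f : R,
        Coalgebra.counit (R := R)
            (W.tr ((x * y - y * x) + W.tr x y - W.tr y x) (algebraMap R H f))
          = Coalgebra.counit (R := R)
              (W.tr x (algebraMap R H (Coalgebra.counit (R := R) (W.tr y (algebraMap R H f)))))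
            - Coalgebra.counit (R := R)
              (W.tr y (algebraMap R H (Coalgebra.counit (R := R) (W.tr x (algebraMap R H f))))))
    -- the post-Lie algebra axioms hold on `P(H)`
    ∧ (∀ x y z : H, IsPrimitive R x → IsPrimitive R y → IsPrimitive R z →
        W.tr x (y * z - z * y)
          = (W.tr x y * z - z * W.tr x y) + (y * W.tr x z - W.tr x z * y))
    ∧ (∀ x y z : H, IsPrimitive R x → IsPrimitive R y → IsPrimitive R z →
        W.tr ((x * y - y * x) + W.tr x y - W.tr y x) z
          = W.tr x (W.tr y z) - W.tr y (W.tr x z))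
    -- the compatibility conditions of a post-Lie-Rinehart algebra hold on `P(H)`
    ∧ (∀ (f : R) (x y : H), IsPrimitive R x → IsPrimitive R y →
        W.tr (f • x) y = f • W.tr x y)
    ∧ (∀ (f : R) (x y : H), IsPrimitive R x → IsPrimitive R y →
        W.tr x (f • y)
          = f • W.tr x y
            + Coalgebra.counit (R := R) (W.tr x (algebraMap R H f)) • y) := by
  refine ⟨?_, ?_, ?_, ?_, ?_, ?_, ?_, ?_, ?_, ?_, ?_, ?_, ?_⟩
  · simp [IsPrimitive]
  · intro x y hx hy
    unfold IsPrimitive at *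
    rw [map_add, hx, hy, TensorProduct.add_tmul, TensorProduct.tmul_add]
    abel
  · intro f x hx
    unfold IsPrimitive at *
    rw [map_smul, hx, smul_add, TensorProduct.smul_tmul']
    congr 1
    rw [TensorProduct.smul_tmul', TensorProduct.smul_tmul]
  · exact fun x y hx hy => WeakPostHopfAlgebroid.prim_comm hx hy
  · exact fun x y hx hy => W.prim_tr hx hy
  · intro x hx
    refine ⟨fun f g => ?_, fun a f => ?_, fun f g => ?_⟩
    · rw [map_add, W.tr_add_right, map_add]
    · have hm : algebraMap R H (a • f) = a • algebraMap R H f := by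
        rw [Algebra.smul_def a f, map_mul, ← IsScalarTower.algebraMap_apply, ← Algebra.smul_def]
      rw [hm, W.tr_smul_right, ← algebraMap_smul R a (W.tr x (algebraMap R H f)),
        map_smul, algebraMap_smul]
    · have hm : algebraMap R H (f * g) = f • algebraMap R H g := by
        rw [map_mul, ← Algebra.smul_def]
      rw [hm, W.tr_smul x hx, map_add, map_smul, map_smul, smul_eq_mul, smul_eq_mul,
        Bialgebra.counit_algebraMap]
      ring
  · intro f x _ g
    rw [W.tr_smul_left, map_smul, smul_eq_mul]
  · intro x y _ _ g
    rw [W.tr_add_left, map_add]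
  · intro x y hx hy f
    rw [W.sub_adjacent hx hy, map_sub]
    conv_lhs => rw [W.tr_algebraMap y f, W.tr_algebraMap x f]
  · intro x y z hx _ _
    rw [W.tr_sub_right, W.tr_mul_prim x hx, W.tr_mul_prim x hx]
    abel
  · exact fun x y z hx hy _ => W.sub_adjacent hx hy z
  · exact fun f x y _ _ => W.tr_smul_left f x y
  · exact fun f x y hx _ => W.tr_smul x hx f y
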